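/- If T is an n-quasi strict m-isometry (an n-quasi-m-isometry that is not an n-quasi-(m-1)-isometry), then for any positive integer k, Δ_{m-1,n}(T^k, x) = k^{m-1} Δ_{m-1,n}(T, x) for all x ∈ H; in particular T^k is an n-quasi strict m-isometry. -/

import Mathlib

open Finset

section DiffCalc

/-- The shift operator on real sequences. -/
noncomputable def Sh : Module.End ℝ (ℕ → ℝ) :=
{ toFun := fun f i => f (i + 1)
  map_add' := fun _ _ => rfl
  map_smul' := fun _ _ => rfl }

lemma Sh_pow_apply (a : ℕ) (f : ℕ → ℝ) (i : ℕ) : ((Sh ^ a) f) i = f (i + a) := by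
  induction a generalizing f i with
  | zero => simp
  | succ a ih =>
    rw [pow_succ, Module.End.mul_apply, ih]
    show f (i + a + 1) = _
    ring_nf

lemma neg_one_pow_apply (p : ℕ) (f : ℕ → ℝ) (i : ℕ) :
    (((-1 : Module.End ℝ (ℕ → ℝ)) ^ p) f) i = (-1 : ℝ) ^ p * f i := by
  induction p generalizing f with
  | zero => simp
  | succ p ih =>
    rw [pow_succ, Module.End.mul_apply, ih]
    simp [pow_succ]

lemma natCast_apply' (c : ℕ) (f : ℕ → ℝ) (i : ℕ) :
    ((c : Module.End ℝ (ℕ → ℝ)) f) i = (c : ℝ) * f i := by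
  simp [Module.End.natCast_apply]

lemma expand (k p : ℕ) (f : ℕ → ℝ) (i : ℕ) :
    (((Sh ^ k - 1) ^ p) f) i
      = ∑ j ∈ range (p + 1), (-1 : ℝ) ^ (p - j) * (p.choose j : ℝ) * f (i + k * j) := by
  have hc : Commute (Sh ^ k) (-1 : Module.End ℝ (ℕ → ℝ)) := (Commute.one_right (Sh ^ k)).neg_right
  rw [sub_eq_add_neg, hc.add_pow]
  rw [LinearMap.sum_apply, Finset.sum_apply]
  refine Finset.sum_congr rfl fun j _ => ?_
  rw [Module.End.mul_apply, Module.End.mul_apply, ← pow_mul, Sh_pow_apply, neg_one_pow_apply,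
    natCast_apply']
  ring

lemma factor (k p : ℕ) :
    (Sh ^ k - 1) ^ p = (∑ t ∈ range k, Sh ^ t) ^ p * (Sh - 1) ^ p := by
  have hc : Commute (∑ t ∈ range k, Sh ^ t) (Sh - 1) := by
    refine Commute.sum_left _ _ _ fun t _ => ?_
    exact ((Commute.refl Sh).pow_left t).sub_right (Commute.one_right _)
  rw [← hc.mul_pow, geom_sum_mul]

lemma geom_pow_const (k p : ℕ) (c : ℝ) :
    ((∑ t ∈ range k, Sh ^ t) ^ p) (fun _ => c) = fun _ => (k : ℝ) ^ p * c := by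
  induction p generalizing c with
  | zero => funext i; simp
  | succ p ih =>
    rw [pow_succ, Module.End.mul_apply]
    have h1 : (∑ t ∈ range k, Sh ^ t) (fun _ => c) = fun _ => (k : ℝ) * c := by
      funext i
      rw [LinearMap.sum_apply, Finset.sum_apply]
      simp [Sh_pow_apply, mul_comm]
    rw [h1, ih]
    funext i
    ring

end DiffCalc

variable {H : Type*} [NormedAddCommGroup H] [InnerProductSpace ℂ H] [CompleteSpace H]

/-- `Δ_{m,n}(T,x) = ∑_{k=0}^m (-1)^{m-k} C(m,k) ‖T^{k+n} x‖²`. -/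
noncomputable def DeltaQ (T : H →L[ℂ] H) (m n : ℕ) (x : H) : ℝ :=
  ∑ k ∈ Finset.range (m + 1),
    (-1 : ℝ) ^ (m - k) * (m.choose k : ℝ) * ‖(T ^ (k + n)) x‖ ^ 2

lemma deltaQ_eq (T : H →L[ℂ] H) (p n : ℕ) (x : H) (i : ℕ) :
    (((Sh - 1) ^ p) (fun a => ‖(T ^ (a + n)) x‖ ^ 2)) i = DeltaQ T p n ((T ^ i) x) := by
  have := expand 1 p (fun a => ‖(T ^ (a + n)) x‖ ^ 2) i
  rw [pow_one] at this
  rw [this, DeltaQ]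
  refine Finset.sum_congr rfl fun j _ => ?_
  have : (T ^ (j + n)) ((T ^ i) x) = (T ^ (i + 1 * j + n)) x := by
    rw [← ContinuousLinearMap.mul_apply, ← pow_add]
    congr 1
    ring
  rw [this]

lemma deltaQ_pow_eq (T : H →L[ℂ] H) (k p n : ℕ) (hk : 1 ≤ k) (x : H) :
    DeltaQ (T ^ k) p n x
      = (((Sh ^ k - 1) ^ p) (fun a => ‖(T ^ (a + n)) x‖ ^ 2)) (k * n - n) := by
  rw [expand, DeltaQ]
  refine Finset.sum_congr rfl fun j _ => ?_
  have hle : n ≤ k * n := Nat.le_mul_of_pos_left n (by omega)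
  have hmul : k * (j + n) = k * j + k * n := by ring
  have he : k * (j + n) = k * n - n + k * j + n := by omega
  have : ((T ^ k) ^ (j + n)) x = (T ^ (k * n - n + k * j + n)) x := by
    rw [← pow_mul, he]
  rw [this]

theorem pow_nQuasi_strict_mIsometry (T : H →L[ℂ] H) (m n : ℕ) (hm : 1 ≤ m) (hn : 1 ≤ n)
    (hT : ∀ x : H, DeltaQ T m n x = 0) (hstrict : ∃ x : H, DeltaQ T (m - 1) n x ≠ 0) :
    ∀ (k : ℕ), 1 ≤ k →
      (∀ x : H, DeltaQ (T ^ k) (m - 1) n x = (k : ℝ) ^ (m - 1) * DeltaQ T (m - 1) n x) ∧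
      (∀ x : H, DeltaQ (T ^ k) m n x = 0) ∧
      (∃ x : H, DeltaQ (T ^ k) (m - 1) n x ≠ 0) := by
  intro k hk
  -- key per-vector facts
  have key : ∀ x : H,
      (((Sh - 1) ^ m) (fun a => ‖(T ^ (a + n)) x‖ ^ 2)) = 0 ∧
      (((Sh - 1) ^ (m - 1)) (fun a => ‖(T ^ (a + n)) x‖ ^ 2))
        = fun _ => DeltaQ T (m - 1) n x := by
    intro x
    set g : ℕ → ℝ := fun a => ‖(T ^ (a + n)) x‖ ^ 2 with hg
    have h0 : ∀ i, (((Sh - 1) ^ m) g) i = 0 := by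
      intro i
      rw [deltaQ_eq]
      exact hT _
    constructor
    · funext i; exact h0 i
    · funext i
      induction i with
      | zero =>
        rw [deltaQ_eq]
        simp
      | succ i ih =>
        have hstep : (((Sh - 1) ^ m) g) i
            = (((Sh - 1) ^ (m - 1)) g) (i + 1) - (((Sh - 1) ^ (m - 1)) g) i := by
          obtain ⟨m', rfl⟩ : ∃ m', m = m' + 1 := ⟨m - 1, by omega⟩
          rw [pow_succ']
          rw [Module.End.mul_apply]
          simp only [Nat.add_sub_cancel]
          rw [LinearMap.sub_apply, Module.End.one_apply]
          rfl
        have := h0 i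
        rw [hstep] at this
        rw [ih] at this
        linarith
  have hfirst : ∀ x : H,
      DeltaQ (T ^ k) (m - 1) n x = (k : ℝ) ^ (m - 1) * DeltaQ T (m - 1) n x := by
    intro x
    rw [deltaQ_pow_eq T k (m - 1) n hk x, factor, Module.End.mul_apply, (key x).2,
      geom_pow_const]
  refine ⟨hfirst, ?_, ?_⟩
  · intro x
    rw [deltaQ_pow_eq T k m n hk x, factor, Module.End.mul_apply, (key x).1, map_zero]
    rfl
  · obtain ⟨x, hx⟩ := hstrict
    refine ⟨x, ?_⟩
    rw [hfirst x]
    exact mul_ne_zero (pow_ne_zero _ (by positivity)) hx
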